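/- arXiv:1709.03686 — 9 statements merged into one kernel-verified Lean document; each statement's English description precedes it below -/
import Mathlib

section
/- The polynomials satisfy the linear relation X_{(12,35,46)} = -X_{(15,24,36)} + X_{(16,23,45)}, where X_{(ab,cd,ef)} = det(v(x_a)×v(x_b), v(x_c)×v(x_d), v(x_e)×v(x_f)) with v(t)=(1,t,t^2). -/
open Matrix

/-- The Veronese vector `v(t) = (1, t, t²)`. -/
def veronese {R : Type*} [CommRing R] (t : R) : Fin 3 → R := ![1, t, t ^ 2]

/-- `X_{(ab,cd,ef)} = det(v(x_a)×v(x_b), v(x_c)×v(x_d), v(x_e)×v(x_f))`. -/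
def Xpoly {R : Type*} [CommRing R] (a b c d e f : R) : R :=
  Matrix.det (Matrix.of ![crossProduct (veronese a) (veronese b),
    crossProduct (veronese c) (veronese d), crossProduct (veronese e) (veronese f)])ᵀ

/-- The linear relation `X_{(12,35,46)} = -X_{(15,24,36)} + X_{(16,23,45)}`. -/
theorem X_relation_123546 {R : Type*} [CommRing R] (x1 x2 x3 x4 x5 x6 : R) :
    Xpoly x1 x2 x3 x5 x4 x6 = -Xpoly x1 x5 x2 x4 x3 x6 + Xpoly x1 x6 x2 x3 x4 x5 := by
  simp only [Xpoly, veronese, crossProduct, det_fin_three]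
  simp [Matrix.of_apply]
  ring
end

section
/- The polynomials satisfy the linear relation X_{(16,24,35)} = X_{(12,34,56)} - X_{(13,25,46)}, where X_{(ab,cd,ef)} = det(v(x_a)×v(x_b), v(x_c)×v(x_d), v(x_e)×v(x_f)) with v(t)=(1,t,t^2). -/
open Matrix

/-- The linear relation `X_{(16,24,35)} = X_{(12,34,56)} - X_{(13,25,46)}`. -/
theorem X_relation_162435 {R : Type*} [CommRing R] (x1 x2 x3 x4 x5 x6 : R) :
    Xpoly x1 x6 x2 x4 x3 x5 = Xpoly x1 x2 x3 x4 x5 x6 - Xpoly x1 x3 x2 x5 x4 x6 := by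
  simp only [Xpoly, veronese, crossProduct, det_fin_three]
  simp [Matrix.cons_val_zero, Matrix.cons_val_one]
  ring
end

section
/- The polynomials C_{(ab,cd,ef)} satisfy the linear relation C_{(16,24,35)} = C_{(13,25,46)} - C_{(12,34,56)}. -/
/-- `C_{(ab,cd,ef)} = det [[1,1,1],[x_a+x_b, x_c+x_d, x_e+x_f],[x_a x_b, x_c x_d, x_e x_f]]`. -/
def Cpoly {R : Type*} [CommRing R] (a b c d e f : R) : R :=
  Matrix.det !![1, 1, 1; a + b, c + d, e + f; a * b, c * d, e * f]

/-- The linear relation `C_{(16,24,35)} = C_{(13,25,46)} - C_{(12,34,56)}`. -/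
theorem C_relation_162435 {R : Type*} [CommRing R] (x1 x2 x3 x4 x5 x6 : R) :
    Cpoly x1 x6 x2 x4 x3 x5 = Cpoly x1 x3 x2 x5 x4 x6 - Cpoly x1 x2 x3 x4 x5 x6 := by
  simp only [Cpoly, Matrix.det_fin_three]
  simp [Matrix.cons_val_zero, Matrix.cons_val_one]
  ring
end

section
/- The polynomials C_{(ab,cd,ef)} satisfy the linear relation C_{(14,25,36)} = C_{(12,34,56)} + C_{(16,23,45)}. -/
/-- The linear relation `C_{(14,25,36)} = C_{(12,34,56)} + C_{(16,23,45)}`. -/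
theorem C_relation_142536 {R : Type*} [CommRing R] (x1 x2 x3 x4 x5 x6 : R) :
    Cpoly x1 x4 x2 x5 x3 x6 = Cpoly x1 x2 x3 x4 x5 x6 + Cpoly x1 x6 x2 x3 x4 x5 := by
  simp [Cpoly, Matrix.det_fin_three]
  ring
end

section
/- With Δ_{ijk} = det(v(x_i), v(x_j), v(x_k)) for v(t)=(1,t,t^2), one has Δ_{134}Δ_{256} = (1/2)(X_{12,34,56} + X_{13,25,46} + X_{14,26,35} + X_{15,24,36} + X_{16,23,45}). -/
open Matrix

/-- The Vandermonde determinant `Δ_{ijk} = det(v(x_i), v(x_j), v(x_k))`. -/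
def Dlt {R : Type*} [CommRing R] (a b c : R) : R :=
  Matrix.det (Matrix.of ![veronese a, veronese b, veronese c])ᵀ

/-- `Δ₁₃₄Δ₂₅₆ = ½(X₁₂,₃₄,₅₆ + X₁₃,₂₅,₄₆ + X₁₄,₂₆,₃₅ + X₁₅,₂₄,₃₆ + X₁₆,₂₃,₄₅)`. -/
theorem Delta134_256 (x1 x2 x3 x4 x5 x6 : ℚ) :
    Dlt x1 x3 x4 * Dlt x2 x5 x6 =
      (1 / 2) * (Xpoly x1 x2 x3 x4 x5 x6 + Xpoly x1 x3 x2 x5 x4 x6 + Xpoly x1 x4 x2 x6 x3 x5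
        + Xpoly x1 x5 x2 x4 x3 x6 + Xpoly x1 x6 x2 x3 x4 x5) := by
  simp only [Dlt, Xpoly, veronese, crossProduct, Matrix.det_fin_three, Matrix.transpose_apply, Matrix.of_apply]
  simp [Matrix.cons_val_zero, Matrix.cons_val_one, Matrix.vecHead, Matrix.vecTail]
  ring
end

section
/- With Δ_{ijk} = det(v(x_i), v(x_j), v(x_k)) for v(t)=(1,t,t^2), one has Δ_{123}Δ_{456} = -(1/2)(X_{12,34,56} + X_{13,25,46} - X_{14,26,35} + X_{15,24,36} - X_{16,23,45}). -/
open Matrix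

/-- `Δ₁₂₃Δ₄₅₆ = -½(X₁₂,₃₄,₅₆ + X₁₃,₂₅,₄₆ - X₁₄,₂₆,₃₅ + X₁₅,₂₄,₃₆ - X₁₆,₂₃,₄₅)`. -/
theorem Delta123_456 (x1 x2 x3 x4 x5 x6 : ℚ) :
    Dlt x1 x2 x3 * Dlt x4 x5 x6 =
      -((1 / 2) * (Xpoly x1 x2 x3 x4 x5 x6 + Xpoly x1 x3 x2 x5 x4 x6 - Xpoly x1 x4 x2 x6 x3 x5
        + Xpoly x1 x5 x2 x4 x3 x6 - Xpoly x1 x6 x2 x3 x4 x5)) := by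
  simp only [Dlt, Xpoly, veronese, crossProduct, Matrix.det_fin_three, Matrix.transpose_apply,
    Matrix.of_apply, Matrix.cons_val', Matrix.cons_val_zero, Matrix.cons_val_one, Matrix.head_cons,
    Matrix.empty_val', Matrix.cons_val_fin_one, Matrix.head_fin_const, Matrix.cons_val_two,
    Matrix.tail_cons, LinearMap.mk₂_apply]
  ring
end

section
/- The sum of the seven Parke-Taylor factors PT(1,2,3,4,5,6) + PT(1,2,4,5,6,3) + PT(1,4,2,5,6,3) + PT(1,4,5,6,2,3) + PT(1,4,6,2,3,5) + PT(1,4,6,2,5,3) + PT(1,6,2,3,4,5) equals -(C_{16,24,35})^2 / [(x_1-x_2)(x_1-x_3)(x_2-x_3)(x_1-x_4)(x_3-x_4)(x_1-x_5)(x_2-x_5)(x_4-x_5)(x_2-x_6)(x_3-x_6)(x_4-x_6)(x_5-x_6)], as rational functions in x_1,…,x_6. -/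
/-- The field of rational functions in six variables over ℚ. -/
abbrev RF := FractionRing (MvPolynomial (Fin 6) ℚ)

/-- The variable `xᵢ` as a rational function. -/
noncomputable def xv (i : Fin 6) : RF :=
  algebraMap (MvPolynomial (Fin 6) ℚ) RF (MvPolynomial.X i)

/-- The Parke–Taylor factor of the cyclic word `(σ₁,…,σ₆)`. -/
noncomputable def PT (a b c d e f : Fin 6) : RF :=
  1 / ((xv a - xv b) * (xv b - xv c) * (xv c - xv d) * (xv d - xv e) * (xv e - xv f) *
    (xv f - xv a))

/-- The numerator polynomial `C₁₆,₂₄,₃₅`, as a rational function. -/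
noncomputable def C162435 : RF :=
  xv 0 * xv 1 * xv 3 - xv 1 * xv 2 * xv 3 - xv 0 * xv 2 * xv 4 + xv 1 * xv 2 * xv 4
    - xv 1 * xv 3 * xv 4 + xv 2 * xv 3 * xv 4 - xv 0 * xv 1 * xv 5 + xv 0 * xv 2 * xv 5
    - xv 0 * xv 3 * xv 5 + xv 1 * xv 3 * xv 5 + xv 0 * xv 4 * xv 5 - xv 2 * xv 4 * xv 5

lemma xv_sub_ne (i j : Fin 6) (h : i ≠ j) : xv i - xv j ≠ 0 := by
  unfold xv
  rw [← map_sub, map_ne_zero_iff _ (IsFractionRing.injective (MvPolynomial (Fin 6) ℚ) RF),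
    sub_ne_zero]
  exact fun hx => h (MvPolynomial.X_injective hx)

lemma ratkey {F : Type*} [Field F] (u01 u02 u03 u04 u05 u12 u13 u14 u15 u23 u24 u25 u34 u35 u45 : F) (g01 : u01 ≠ 0) (g02 : u02 ≠ 0) (g03 : u03 ≠ 0) (g04 : u04 ≠ 0) (g05 : u05 ≠ 0) (g12 : u12 ≠ 0) (g13 : u13 ≠ 0) (g14 : u14 ≠ 0) (g15 : u15 ≠ 0) (g23 : u23 ≠ 0) (g24 : u24 ≠ 0) (g25 : u25 ≠ 0) (g34 : u34 ≠ 0) (g35 : u35 ≠ 0) (g45 : u45 ≠ 0) :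
    1 / (u01 * u12 * u23 * u34 * u45 * (-u05)) + 1 / (u01 * u13 * u34 * u45 * (-u25) * (-u02)) + 1 / (u03 * (-u13) * u14 * u45 * (-u25) * (-u02)) + 1 / (u03 * u34 * u45 * (-u15) * u12 * (-u02)) + 1 / (u03 * u35 * (-u15) * u12 * u24 * (-u04)) + 1 / (u03 * u35 * (-u15) * u14 * (-u24) * (-u02)) + 1 / (u05 * (-u15) * u12 * u23 * u34 * (-u04)) =
    ((-(u02 * u03 * u04 * u13 * u14 * u15 * u24 * u25 * u35)) + ((u03 * u04 * u05 * u12 * u14 * u15 * u23 * u24 * u35)) + (-(u01 * u04 * u05 * u12 * u15 * u23 * u24 * u34 * u35)) + ((u01 * u04 * u05 * u13 * u14 * u23 * u24 * u25 * u35)) + ((u01 * u02 * u05 * u13 * u14 * u23 * u25 * u34 * u45)) + (-(u01 * u04 * u05 * u12 * u13 * u23 * u25 * u34 * u45)) + ((u01 * u02 * u03 * u13 * u14 * u24 * u25 * u35 * u45))) / ((u01 * u02 * u12 * u03 * u23 * u04 * u14 * u34 * u15 * u25 * u35 * u45) * (u05 * u13 * u24)) := by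
  have hQ : ((u01 * u02 * u12 * u03 * u23 * u04 * u14 * u34 * u15 * u25 * u35 * u45) * (u05 * u13 * u24)) ≠ 0 := (mul_ne_zero (mul_ne_zero (mul_ne_zero (mul_ne_zero (mul_ne_zero (mul_ne_zero (mul_ne_zero (mul_ne_zero (mul_ne_zero (mul_ne_zero (mul_ne_zero (mul_ne_zero g01 g02) g12) g03) g23) g04) g14) g34) g15) g25) g35) g45) (mul_ne_zero (mul_ne_zero g05 g13) g24))
  have t0 : 1 / (u01 * u12 * u23 * u34 * u45 * (-u05)) = (-(u02 * u03 * u04 * u13 * u14 * u15 * u24 * u25 * u35)) / ((u01 * u02 * u12 * u03 * u23 * u04 * u14 * u34 * u15 * u25 * u35 * u45) * (u05 * u13 * u24)) := by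
    rw [div_eq_div_iff (mul_ne_zero (mul_ne_zero (mul_ne_zero (mul_ne_zero (mul_ne_zero g01 g12) g23) g34) g45) (neg_ne_zero.mpr g05)) hQ]; ring
  have t1 : 1 / (u01 * u13 * u34 * u45 * (-u25) * (-u02)) = ((u03 * u04 * u05 * u12 * u14 * u15 * u23 * u24 * u35)) / ((u01 * u02 * u12 * u03 * u23 * u04 * u14 * u34 * u15 * u25 * u35 * u45) * (u05 * u13 * u24)) := by
    rw [div_eq_div_iff (mul_ne_zero (mul_ne_zero (mul_ne_zero (mul_ne_zero (mul_ne_zero g01 g13) g34) g45) (neg_ne_zero.mpr g25)) (neg_ne_zero.mpr g02)) hQ]; ring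
  have t2 : 1 / (u03 * (-u13) * u14 * u45 * (-u25) * (-u02)) = (-(u01 * u04 * u05 * u12 * u15 * u23 * u24 * u34 * u35)) / ((u01 * u02 * u12 * u03 * u23 * u04 * u14 * u34 * u15 * u25 * u35 * u45) * (u05 * u13 * u24)) := by
    rw [div_eq_div_iff (mul_ne_zero (mul_ne_zero (mul_ne_zero (mul_ne_zero (mul_ne_zero g03 (neg_ne_zero.mpr g13)) g14) g45) (neg_ne_zero.mpr g25)) (neg_ne_zero.mpr g02)) hQ]; ring
  have t3 : 1 / (u03 * u34 * u45 * (-u15) * u12 * (-u02)) = ((u01 * u04 * u05 * u13 * u14 * u23 * u24 * u25 * u35)) / ((u01 * u02 * u12 * u03 * u23 * u04 * u14 * u34 * u15 * u25 * u35 * u45) * (u05 * u13 * u24)) := by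
    rw [div_eq_div_iff (mul_ne_zero (mul_ne_zero (mul_ne_zero (mul_ne_zero (mul_ne_zero g03 g34) g45) (neg_ne_zero.mpr g15)) g12) (neg_ne_zero.mpr g02)) hQ]; ring
  have t4 : 1 / (u03 * u35 * (-u15) * u12 * u24 * (-u04)) = ((u01 * u02 * u05 * u13 * u14 * u23 * u25 * u34 * u45)) / ((u01 * u02 * u12 * u03 * u23 * u04 * u14 * u34 * u15 * u25 * u35 * u45) * (u05 * u13 * u24)) := by
    rw [div_eq_div_iff (mul_ne_zero (mul_ne_zero (mul_ne_zero (mul_ne_zero (mul_ne_zero g03 g35) (neg_ne_zero.mpr g15)) g12) g24) (neg_ne_zero.mpr g04)) hQ]; ring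
  have t5 : 1 / (u03 * u35 * (-u15) * u14 * (-u24) * (-u02)) = (-(u01 * u04 * u05 * u12 * u13 * u23 * u25 * u34 * u45)) / ((u01 * u02 * u12 * u03 * u23 * u04 * u14 * u34 * u15 * u25 * u35 * u45) * (u05 * u13 * u24)) := by
    rw [div_eq_div_iff (mul_ne_zero (mul_ne_zero (mul_ne_zero (mul_ne_zero (mul_ne_zero g03 g35) (neg_ne_zero.mpr g15)) g14) (neg_ne_zero.mpr g24)) (neg_ne_zero.mpr g02)) hQ]; ring
  have t6 : 1 / (u05 * (-u15) * u12 * u23 * u34 * (-u04)) = ((u01 * u02 * u03 * u13 * u14 * u24 * u25 * u35 * u45)) / ((u01 * u02 * u12 * u03 * u23 * u04 * u14 * u34 * u15 * u25 * u35 * u45) * (u05 * u13 * u24)) := by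
    rw [div_eq_div_iff (mul_ne_zero (mul_ne_zero (mul_ne_zero (mul_ne_zero (mul_ne_zero g05 (neg_ne_zero.mpr g15)) g12) g23) g34) (neg_ne_zero.mpr g04)) hQ]; ring
  rw [t0, t1, t2, t3, t4, t5, t6, ← add_div, ← add_div, ← add_div,
    ← add_div, ← add_div, ← add_div]

set_option maxHeartbeats 2000000 in
lemma key {F : Type*} [Field F] (a b c d e f : F) (h01 : (a - b) ≠ 0) (h02 : (a - c) ≠ 0) (h03 : (a - d) ≠ 0) (h04 : (a - e) ≠ 0) (h05 : (a - f) ≠ 0) (h12 : (b - c) ≠ 0) (h13 : (b - d) ≠ 0) (h14 : (b - e) ≠ 0) (h15 : (b - f) ≠ 0) (h23 : (c - d) ≠ 0) (h24 : (c - e) ≠ 0) (h25 : (c - f) ≠ 0) (h34 : (d - e) ≠ 0) (h35 : (d - f) ≠ 0) (h45 : (e - f) ≠ 0) :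
    1 / ((a - b) * (b - c) * (c - d) * (d - e) * (e - f) * (f - a)) + 1 / ((a - b) * (b - d) * (d - e) * (e - f) * (f - c) * (c - a)) + 1 / ((a - d) * (d - b) * (b - e) * (e - f) * (f - c) * (c - a)) + 1 / ((a - d) * (d - e) * (e - f) * (f - b) * (b - c) * (c - a)) + 1 / ((a - d) * (d - f) * (f - b) * (b - c) * (c - e) * (e - a)) + 1 / ((a - d) * (d - f) * (f - b) * (b - e) * (e - c) * (c - a)) + 1 / ((a - f) * (f - b) * (b - c) * (c - d) * (d - e) * (e - a)) = -((a*b*d - b*c*d - a*c*e + b*c*e - b*d*e + c*d*e - a*b*f + a*c*f - a*d*f + b*d*f + a*e*f - c*e*f)^2) / ((a - b) * (a - c) * (b - c) * (a - d) * (c - d) * (a - e) * (b - e) * (d - e) * (b - f) * (c - f) * (d - f) * (e - f)) := by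
  have hm : ((a - f) * (b - d) * (c - e)) ≠ 0 := (mul_ne_zero (mul_ne_zero h05 h13) h24)
  have hrhs : -((a*b*d - b*c*d - a*c*e + b*c*e - b*d*e + c*d*e - a*b*f + a*c*f - a*d*f + b*d*f + a*e*f - c*e*f)^2) / ((a - b) * (a - c) * (b - c) * (a - d) * (c - d) * (a - e) * (b - e) * (d - e) * (b - f) * (c - f) * (d - f) * (e - f)) = -((a*b*d - b*c*d - a*c*e + b*c*e - b*d*e + c*d*e - a*b*f + a*c*f - a*d*f + b*d*f + a*e*f - c*e*f)^2) * (((a - f) * (b - d) * (c - e))) / (((a - b) * (a - c) * (b - c) * (a - d) * (c - d) * (a - e) * (b - e) * (d - e) * (b - f) * (c - f) * (d - f) * (e - f)) * (((a - f) * (b - d) * (c - e)))) :=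
    (mul_div_mul_right _ _ hm).symm
  rw [hrhs, show c - a = -(a - c) from by ring, show d - b = -(b - d) from by ring, show e - a = -(a - e) from by ring, show e - c = -(c - e) from by ring, show f - a = -(a - f) from by ring, show f - b = -(b - f) from by ring, show f - c = -(c - f) from by ring]
  rw [ratkey (a - b) (a - c) (a - d) (a - e) (a - f) (b - c) (b - d) (b - e) (b - f) (c - d) (c - e) (c - f) (d - e) (d - f) (e - f) h01 h02 h03 h04 h05 h12 h13 h14 h15 h23 h24 h25 h34 h35 h45]
  congr 1
  ring

/-- The sum of the seven Parke–Taylor factors collapses to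
`-(C₁₆,₂₄,₃₅)² / ∏ (xᵢ-xⱼ)`. -/
theorem seven_PT_sum :
    PT 0 1 2 3 4 5 + PT 0 1 3 4 5 2 + PT 0 3 1 4 5 2 + PT 0 3 4 5 1 2
      + PT 0 3 5 1 2 4 + PT 0 3 5 1 4 2 + PT 0 5 1 2 3 4 =
    -(C162435 ^ 2) /
      ((xv 0 - xv 1) * (xv 0 - xv 2) * (xv 1 - xv 2) * (xv 0 - xv 3) * (xv 2 - xv 3) *
        (xv 0 - xv 4) * (xv 1 - xv 4) * (xv 3 - xv 4) * (xv 1 - xv 5) * (xv 2 - xv 5) *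
        (xv 3 - xv 5) * (xv 4 - xv 5)) := by
  unfold PT C162435
  exact key (xv 0) (xv 1) (xv 2) (xv 3) (xv 4) (xv 5)
    (xv_sub_ne 0 1 (by decide)) (xv_sub_ne 0 2 (by decide)) (xv_sub_ne 0 3 (by decide))
    (xv_sub_ne 0 4 (by decide)) (xv_sub_ne 0 5 (by decide)) (xv_sub_ne 1 2 (by decide))
    (xv_sub_ne 1 3 (by decide)) (xv_sub_ne 1 4 (by decide)) (xv_sub_ne 1 5 (by decide))
    (xv_sub_ne 2 3 (by decide)) (xv_sub_ne 2 4 (by decide)) (xv_sub_ne 2 5 (by decide))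
    (xv_sub_ne 3 4 (by decide)) (xv_sub_ne 3 5 (by decide)) (xv_sub_ne 4 5 (by decide))
end

section
/- Under the cyclic shift of variables x_i ↦ x_{i+1} (indices mod 6), the polynomial C_{12,34,56} is sent to ±C_{16,23,45}, C_{16,23,45} to ±C_{12,34,56}, and the set {C_{14,26,35}, C_{15,24,36}, C_{13,25,46}} is permuted up to sign; i.e., the cyclic group ⟨(123456)⟩ acting on indices preserves, up to sign, the partition of the basis into the orbits {C_{12,34,56}, C_{16,23,45}} and {C_{14,26,35}, C_{15,24,36}, C_{13,25,46}}. -/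
open MvPolynomial

/-- `C_{(ab,cd,ef)}` as a polynomial in `ℚ[x₁,…,x₆]`, given the six indices. -/
noncomputable def Cp (a b c d e f : Fin 6) : MvPolynomial (Fin 6) ℚ :=
  Matrix.det !![1, 1, 1; X a + X b, X c + X d, X e + X f; X a * X b, X c * X d, X e * X f]

/-- The cyclic shift `xᵢ ↦ xᵢ₊₁` (indices mod 6). -/
noncomputable def cyc : MvPolynomial (Fin 6) ℚ →ₐ[ℚ] MvPolynomial (Fin 6) ℚ :=
  rename (finRotate 6)

lemma cyc_Cp (a b c d e f : Fin 6) :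
    cyc (Cp a b c d e f) = Cp (a+1) (b+1) (c+1) (d+1) (e+1) (f+1) := by
  simp [Cp, cyc, Matrix.det_fin_three, finRotate_succ_apply]

lemma case1 : cyc (Cp 0 1 2 3 4 5) = Cp 0 5 1 2 3 4 := by
  rw [cyc_Cp]; show Cp 1 2 3 4 5 0 = _; simp [Cp, Matrix.det_fin_three]; ring

lemma case2 : cyc (Cp 0 5 1 2 3 4) = Cp 0 1 2 3 4 5 := by
  rw [cyc_Cp]; show Cp 1 0 2 3 4 5 = _; simp [Cp, Matrix.det_fin_three]; ring

lemma case3 : cyc (Cp 0 3 1 5 2 4) = -Cp 0 2 1 4 3 5 := by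
  rw [cyc_Cp]; show Cp 1 4 2 0 3 5 = _; simp [Cp, Matrix.det_fin_three]; ring

lemma case4 : cyc (Cp 0 4 1 3 2 5) = Cp 0 3 1 5 2 4 := by
  rw [cyc_Cp]; show Cp 1 5 2 4 3 0 = _; simp [Cp, Matrix.det_fin_three]; ring

lemma case5 : cyc (Cp 0 2 1 4 3 5) = Cp 0 4 1 3 2 5 := by
  rw [cyc_Cp]; show Cp 1 3 2 5 4 0 = _; simp [Cp, Matrix.det_fin_three]; ring

/-- Under the cyclic shift `(123456)`, `C₁₂,₃₄,₅₆ ↦ ±C₁₆,₂₃,₄₅`, `C₁₆,₂₃,₄₅ ↦ ±C₁₂,₃₄,₅₆`, and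
the set `{C₁₄,₂₆,₃₅, C₁₅,₂₄,₃₆, C₁₃,₂₅,₄₆}` is permuted up to sign. -/
theorem cyclic_orbits :
    (cyc (Cp 0 1 2 3 4 5) = Cp 0 5 1 2 3 4 ∨ cyc (Cp 0 1 2 3 4 5) = -Cp 0 5 1 2 3 4) ∧
    (cyc (Cp 0 5 1 2 3 4) = Cp 0 1 2 3 4 5 ∨ cyc (Cp 0 5 1 2 3 4) = -Cp 0 1 2 3 4 5) ∧
    (∀ p ∈ ({Cp 0 3 1 5 2 4, Cp 0 4 1 3 2 5, Cp 0 2 1 4 3 5} : Set (MvPolynomial (Fin 6) ℚ)),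
      ∃ q ∈ ({Cp 0 3 1 5 2 4, Cp 0 4 1 3 2 5, Cp 0 2 1 4 3 5} : Set (MvPolynomial (Fin 6) ℚ)),
        cyc p = q ∨ cyc p = -q) := by
  refine ⟨Or.inl case1, Or.inl case2, ?_⟩
  rintro p (rfl | rfl | rfl)
  · exact ⟨Cp 0 2 1 4 3 5, by simp, Or.inr case3⟩
  · exact ⟨Cp 0 3 1 5 2 4, by simp, Or.inl case4⟩
  · exact ⟨Cp 0 4 1 3 2 5, by simp, Or.inl case5⟩
end

section
/- The five polynomials C_{12,34,56}, C_{16,23,45}, C_{14,26,35}, C_{15,24,36}, C_{13,25,46} are linearly independent over ℚ in the polynomial ring ℚ[x_1,…,x_6]. -/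
open MvPolynomial

/-- The five polynomials `C₁₂,₃₄,₅₆, C₁₆,₂₃,₄₅, C₁₄,₂₆,₃₅, C₁₅,₂₄,₃₆, C₁₃,₂₅,₄₆` are linearly
independent over ℚ. -/
theorem C_linearIndependent :
    LinearIndependent ℚ
      ![Cp 0 1 2 3 4 5, Cp 0 5 1 2 3 4, Cp 0 3 1 5 2 4, Cp 0 4 1 3 2 5, Cp 0 2 1 4 3 5] := by
  rw [Fintype.linearIndependent_iff]
  intro g h i
  have e1 := congrArg (MvPolynomial.eval ![(0:ℚ),1,1,0,3,0]) h
  have e2 := congrArg (MvPolynomial.eval ![(0:ℚ),3,2,3,3,1]) h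
  have e3 := congrArg (MvPolynomial.eval ![(3:ℚ),0,2,1,2,1]) h
  have e4 := congrArg (MvPolynomial.eval ![(3:ℚ),1,2,0,0,0]) h
  have e5 := congrArg (MvPolynomial.eval ![(3:ℚ),1,0,3,3,2]) h
  simp [Cp, Matrix.det_fin_three, Fin.sum_univ_five, mul_comm, Matrix.cons_val_succ] at e1 e2 e3 e4 e5
  have v1 : (![(0:ℚ),1,1,0,3,0] : Fin 6 → ℚ) 5 = 0 := rfl
  have v2 : (![(0:ℚ),3,2,3,3,1] : Fin 6 → ℚ) 5 = 1 := rfl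
  have v3 : (![(3:ℚ),0,2,1,2,1] : Fin 6 → ℚ) 5 = 1 := rfl
  have v4 : (![(3:ℚ),1,2,0,0,0] : Fin 6 → ℚ) 5 = 0 := rfl
  have v5 : (![(3:ℚ),1,0,3,3,2] : Fin 6 → ℚ) 5 = 2 := rfl
  norm_num at e1 e2 e3 e4 e5
  fin_cases i <;> simp <;> linarith [e1, e2, e3, e4, e5]
end
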